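/- arXiv:2308.06606 — 7 statements merged into one kernel-verified Lean document; each statement's English description precedes it below -/
import Mathlib

section
/- Let R be a commutative Noetherian local ring, M a finitely generated R-module with annihilator J = Ann_R(M), and N a finitely generated R-module. If M ⊗_R N ≅ M^{⊕μ(N)} (where μ(N) is the minimal number of generators of N), then N/JN is a free R/J-module of rank μ(N). -/
open TensorProduct

/-- The minimal number of generators of an `R`-module `M`. -/
noncomputable def minGens (R : Type*) [Semiring R] (M : Type*) [AddCommMonoid M]
    [Module R M] : ℕ :=
  sInf {n : ℕ | ∃ f : (Fin n → R) →ₗ[R] M, Function.Surjective f}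

/-- If `R` is a commutative Noetherian local ring, `M`, `N` are finitely generated
`R`-modules, `J = Ann_R M`, and `M ⊗_R N ≅ M^{μ(N)}`, then `N/JN` is a free
`R/J`-module of rank `μ(N)`. -/
theorem stmt0 {R : Type*} [CommRing R] [IsNoetherianRing R] [IsLocalRing R]
    {M N : Type*} [AddCommGroup M] [Module R M] [Module.Finite R M]
    [AddCommGroup N] [Module R N] [Module.Finite R N]
    (J : Ideal R) (hJ : J = Module.annihilator R M)
    (h : Nonempty ((M ⊗[R] N) ≃ₗ[R] (Fin (minGens R N) → M))) :
    Nonempty ((N ⧸ (J • (⊤ : Submodule R N))) ≃ₗ[R] (Fin (minGens R N) → R ⧸ J)) := by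
  classical
  set n := minGens R N with hn
  -- obtain a minimal surjection
  have hne : {m : ℕ | ∃ f : (Fin m → R) →ₗ[R] N, Function.Surjective f}.Nonempty := by
    obtain ⟨m, f, hf⟩ := Module.Finite.exists_fin' R N
    exact ⟨m, f, hf⟩
  have hmem : n ∈ {m : ℕ | ∃ f : (Fin m → R) →ₗ[R] N, Function.Surjective f} :=
    Nat.sInf_mem hne
  obtain ⟨f, hf⟩ := hmem
  obtain ⟨e⟩ := h
  set e1 : M ⊗[R] (Fin n → R) ≃ₗ[R] (Fin n → M) := TensorProduct.piScalarRight R R M (Fin n)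
  set g : (Fin n → M) →ₗ[R] (Fin n → M) :=
    e.toLinearMap ∘ₗ (LinearMap.lTensor M f) ∘ₗ e1.symm.toLinearMap with hg
  have hgsurj : Function.Surjective g := by
    apply Function.Surjective.comp e.surjective
    apply Function.Surjective.comp (LinearMap.lTensor_surjective M hf)
    exact e1.symm.surjective
  have hginj : Function.Injective g :=
    OrzechProperty.injective_of_surjective_endomorphism g hgsurj
  have hTinj : Function.Injective (LinearMap.lTensor M f) := by
    have : (LinearMap.lTensor M f) = e.symm.toLinearMap ∘ₗ g ∘ₗ e1.toLinearMap := by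
      rw [hg]; ext x; simp
    rw [this]
    exact e.symm.injective.comp (hginj.comp e1.injective)
  -- kernel of f lies in J^n
  have hker : ∀ v ∈ LinearMap.ker f, ∀ i, v i ∈ J := by
    intro v hv i
    rw [hJ, Module.mem_annihilator]
    intro m
    have h0 : LinearMap.lTensor M f (m ⊗ₜ v) = 0 := by
      simp [LinearMap.mem_ker.mp hv]
    have h1 : (m ⊗ₜ v : M ⊗[R] (Fin n → R)) = 0 := hTinj (by simpa using h0)
    have h2 := congrArg (fun x => e1 x) h1
    simp only [map_zero] at h2
    have := congrFun (by simpa [e1] using h2) i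
    simpa using this
  -- the componentwise quotient map
  set q : (Fin n → R) →ₗ[R] (Fin n → R ⧸ J) :=
    LinearMap.pi (fun i => (J.mkQ).comp (LinearMap.proj i)) with hq
  have hqsurj : Function.Surjective q := by
    intro y
    choose v hv using fun i => Ideal.Quotient.mk_surjective (y i)
    exact ⟨v, funext fun i => by simp [q, hv i]⟩
  have hkerq : ∀ v, q v = 0 ↔ ∀ i, v i ∈ J := by
    intro v
    constructor
    · intro hv i
      have := congrFun hv i
      simpa [q, Ideal.Quotient.eq_zero_iff_mem] using this
    · intro hv
      funext i
      simpa [q, Ideal.Quotient.eq_zero_iff_mem] using hv i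
  -- factor q through f
  have hle : LinearMap.ker f ≤ LinearMap.ker q := by
    intro v hv
    rw [LinearMap.mem_ker, hkerq]
    exact hker v hv
  set q' : N →ₗ[R] (Fin n → R ⧸ J) := (LinearMap.ker f).liftQ q hle ∘ₗ
    (f.quotKerEquivOfSurjective hf).symm.toLinearMap with hq'
  have hq'f : ∀ v, q' (f v) = q v := by
    intro v
    have : (f.quotKerEquivOfSurjective hf).symm (f v) =
        Submodule.Quotient.mk v := by
      apply (f.quotKerEquivOfSurjective hf).injective
      simp [LinearMap.quotKerEquivOfSurjective]
    simp [q', this]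
  have hq'surj : Function.Surjective q' := by
    intro y
    obtain ⟨v, hv⟩ := hqsurj y
    exact ⟨f v, by rw [hq'f, hv]⟩
  have hkerq' : LinearMap.ker q' = J • (⊤ : Submodule R N) := by
    apply le_antisymm
    · intro x hx
      obtain ⟨v, rfl⟩ := hf x
      rw [LinearMap.mem_ker, hq'f, hkerq] at hx
      have hv' : v = ∑ i, v i • (Pi.single i (1 : R) : Fin n → R) := by
        funext j
        simp [Finset.sum_apply, Pi.single_apply]
      have : f v = ∑ i, v i • f (Pi.single i 1) := by
        conv_lhs => rw [hv']
        simp [map_sum]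
      rw [this]
      apply Submodule.sum_mem
      intro i _
      exact Submodule.smul_mem_smul (hx i) trivial
    · rw [Submodule.smul_le]
      intro r hr x _
      rw [LinearMap.mem_ker, map_smul]
      obtain ⟨v, rfl⟩ := hf x
      rw [hq'f]
      funext i
      simp only [Pi.smul_apply, Pi.zero_apply, q, LinearMap.pi_apply, LinearMap.comp_apply,
        LinearMap.proj_apply, Submodule.mkQ_apply]
      rw [← Submodule.Quotient.mk_smul, Submodule.Quotient.mk_eq_zero, smul_eq_mul]
      exact J.mul_mem_right _ hr
  exact ⟨(hkerq' ▸ q'.quotKerEquivOfSurjective hq'surj)⟩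
end

section
/- Let R be a commutative Noetherian local ring and M, N finitely generated R-modules. If N/JN ≅ (R/J)^{⊕μ(N)} where J = Ann_R(M), then M ⊗_R N ≅ M^{⊕μ(N)}. -/
open TensorProduct

/-- If `R` is a commutative Noetherian local ring, `M`, `N` are finitely generated
`R`-modules, `J = Ann_R M`, and `N/JN ≅ (R/J)^{μ(N)}`, then `M ⊗_R N ≅ M^{μ(N)}`. -/
theorem stmt1 {R : Type*} [CommRing R] [IsNoetherianRing R] [IsLocalRing R]
    {M N : Type*} [AddCommGroup M] [Module R M] [Module.Finite R M]
    [AddCommGroup N] [Module R N] [Module.Finite R N]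
    (J : Ideal R) (hJ : J = Module.annihilator R M)
    (h : Nonempty ((N ⧸ (J • (⊤ : Submodule R N))) ≃ₗ[R] (Fin (minGens R N) → R ⧸ J))) :
    Nonempty ((M ⊗[R] N) ≃ₗ[R] (Fin (minGens R N) → M)) := by
  obtain ⟨e⟩ := h
  have hann : ∀ (j : R), j ∈ J → ∀ (m : M), j • m = 0 := by
    intro j hj m
    rw [hJ] at hj
    exact Module.mem_annihilator.mp hj m
  -- the key map M ⊗ (J•⊤ : Submodule R N) → M ⊗ N is zero
  have hzero : (TensorProduct.map (LinearMap.id : M →ₗ[R] M)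
      (J • (⊤ : Submodule R N)).subtype) = 0 := by
    apply TensorProduct.ext'
    rintro m ⟨x, hx⟩
    simp only [TensorProduct.map_tmul, LinearMap.id_coe, id_eq, Submodule.coe_subtype,
      LinearMap.zero_apply]
    refine Submodule.smul_induction_on hx ?_ ?_
    · intro j hj y _
      rw [TensorProduct.tmul_smul, TensorProduct.smul_tmul', hann j hj, TensorProduct.zero_tmul]
    · intro a b ha hb
      rw [TensorProduct.tmul_add, ha, hb, add_zero]
  have hrange : LinearMap.range (TensorProduct.map (LinearMap.id : M →ₗ[R] M)
      (J • (⊤ : Submodule R N)).subtype) = ⊥ := by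
    rw [hzero, LinearMap.range_zero]
  have hJM : (J • (⊤ : Submodule R M)) = ⊥ := by
    rw [eq_bot_iff]
    refine Submodule.smul_le.mpr ?_
    intro j hj m _
    simpa using hann j hj m
  -- assemble the chain of equivalences
  refine ⟨?_⟩
  have e1 : M ⊗[R] N ≃ₗ[R] ((M ⊗[R] N) ⧸ (LinearMap.range (TensorProduct.map
      (LinearMap.id : M →ₗ[R] M) (J • (⊤ : Submodule R N)).subtype))) :=
    (Submodule.quotEquivOfEqBot _ hrange).symm
  have e2 := (TensorProduct.tensorQuotientEquiv M (J • (⊤ : Submodule R N))).symm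
  have e3 := TensorProduct.congr (LinearEquiv.refl R M) e
  have e4 := TensorProduct.piRight R R M (fun _ : Fin (minGens R N) => (R ⧸ J))
  have e5 := LinearEquiv.piCongrRight
    (fun _ : Fin (minGens R N) => TensorProduct.tensorQuotEquivQuotSMul M J)
  have e6 := LinearEquiv.piCongrRight
    (fun _ : Fin (minGens R N) => Submodule.quotEquivOfEqBot _ hJM)
  exact e1 ≪≫ₗ e2 ≪≫ₗ e3 ≪≫ₗ e4 ≪≫ₗ e5 ≪≫ₗ e6
end

section
/- Let R be a commutative Noetherian local ring and M ≠ 0, N finitely generated R-modules such that M ⊗_R N ≅ M^{⊕μ(N)}. If M is faithful (i.e., Ann_R(M) = 0), then N is a free R-module. -/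
open TensorProduct

/-- If `R` is a commutative Noetherian local ring, `M ≠ 0`, `N` are finitely generated
`R`-modules with `M ⊗_R N ≅ M^{μ(N)}` and `M` is faithful (`Ann_R M = 0`),
then `N` is a free `R`-module. -/
theorem stmt2 {R : Type*} [CommRing R] [IsNoetherianRing R] [IsLocalRing R]
    {M N : Type*} [AddCommGroup M] [Module R M] [Module.Finite R M] [Nontrivial M]
    [AddCommGroup N] [Module R N] [Module.Finite R N]
    (h : Nonempty ((M ⊗[R] N) ≃ₗ[R] (Fin (minGens R N) → M)))
    (hf : Module.annihilator R M = ⊥) :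
    Module.Free R N := by
  obtain ⟨e⟩ := h
  have hne : {n : ℕ | ∃ f : (Fin n → R) →ₗ[R] N, Function.Surjective f}.Nonempty := by
    obtain ⟨k, f, hfs⟩ := Module.Finite.exists_fin' R N
    exact ⟨k, f, hfs⟩
  set n := minGens R N with hn
  obtain ⟨f, hfsurj⟩ : ∃ f : (Fin n → R) →ₗ[R] N, Function.Surjective f := Nat.sInf_mem hne
  let ι : M ⊗[R] (Fin n → R) ≃ₗ[R] (Fin n → M) := TensorProduct.piScalarRight R R M (Fin n)
  let φ : (Fin n → M) →ₗ[R] (Fin n → M) :=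
    e.toLinearMap ∘ₗ (LinearMap.lTensor M f) ∘ₗ ι.symm.toLinearMap
  have hφ : Function.Surjective φ := by
    simp only [φ, LinearMap.coe_comp]
    exact e.surjective.comp ((LinearMap.lTensor_surjective M hfsurj).comp ι.symm.surjective)
  have hφinj : Function.Injective φ := IsNoetherian.injective_of_surjective_endomorphism φ hφ
  have hlinj : Function.Injective (LinearMap.lTensor M f) := by
    have : (LinearMap.lTensor M f) = e.symm.toLinearMap ∘ₗ φ ∘ₗ ι.toLinearMap := by
      ext x
      simp [φ]
    rw [this]
    exact e.symm.injective.comp (hφinj.comp ι.injective)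
  have hfinj : Function.Injective f := by
    rw [injective_iff_map_eq_zero]
    intro k hk
    have hk0 : ∀ m : M, m ⊗ₜ[R] k = (0 : M ⊗[R] (Fin n → R)) := by
      intro m
      apply hlinj
      simp [hk]
    funext i
    have : (k i) ∈ Module.annihilator R M := by
      rw [Module.mem_annihilator]
      intro m
      have := congrFun (congrArg ι (hk0 m)) i
      simpa [ι] using this
    rw [hf] at this
    simpa using this
  exact Module.Free.of_equiv (LinearEquiv.ofBijective f ⟨hfinj, hfsurj⟩)
end

section
/- Let R be a commutative Noetherian local ring and M ≠ 0, N finitely generated R-modules such that M ⊗_R N ≅ M^{⊕μ(N)}. Set J = Ann_R(M). Then for any finitely generated R-module L with J ⊆ Ann_R(L), there is an isomorphism Tor_1^R(L, N) ≅ L ⊗_R Ω^1_R(N), where Ω^1_R(N) denotes the first syzygy of N (the kernel of a minimal free cover R^{⊕μ(N)} → N). -/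
open CategoryTheory TensorProduct

universe u

namespace Stmt3Aux

open CategoryTheory.MonoidalCategory CategoryTheory.Limits CategoryTheory.Projective
  CategoryTheory.Category

noncomputable section

variable {C : Type*} [Category C] [Abelian C] [EnoughProjectives C]

/-- Projective resolution complex starting from a chosen epi `p : P0 ⟶ Z`. -/
def resComplex {Z P0 : C} (p : P0 ⟶ Z) : ChainComplex C ℕ :=
  ChainComplex.mk' P0 (syzygies p) (d p) (fun f => ⟨_, d f, by
    simp only [d]; exact (assoc (π (kernel f)) (kernel.ι f) f).trans (by rw [kernel.condition, comp_zero]; rfl)⟩)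

lemma resComplex_d_1_0 {Z P0 : C} (p : P0 ⟶ Z) : (resComplex p).d 1 0 = d p := by
  simp [resComplex]

lemma resComplex_d_2_1 {Z P0 : C} (p : P0 ⟶ Z) : (resComplex p).d 2 1 = d (d p) := by
  simp [resComplex, ChainComplex.mk']

instance resComplex_projective {Z P0 : C} (p : P0 ⟶ Z) [Projective P0] (n : ℕ) :
    Projective ((resComplex p).X n) := by
  obtain (_ | _ | _ | n) := n
  · exact inferInstanceAs (Projective P0)
  · apply Projective.projective_over
  · apply Projective.projective_over
  · apply Projective.projective_over

lemma resComplex_exactAt_succ {Z P0 : C} (p : P0 ⟶ Z) (n : ℕ) :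
    (resComplex p).ExactAt (n + 1) := by
  rw [HomologicalComplex.exactAt_iff' _ (n + 1 + 1) (n + 1) n (by simp) (by simp)]
  refine ShortComplex.exact_of_iso ?_ (exact_d_f ((resComplex p).d (n + 1) n))
  refine ShortComplex.isoMk ((show (resComplex p).X (n + 2) ≅ syzygies ((resComplex p).d (n + 1) n)
    from ChainComplex.mk'XIso _ _ _ _ n).symm) (Iso.refl _) (Iso.refl _) ?_ ?_
  · show _ ≫ (resComplex p).d (n + 2) (n + 1) = _
    refine Eq.trans (congrArg (fun x => _ ≫ x) (ChainComplex.mk'_d P0 (syzygies p) (d p) _ n)) ?_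
    exact (Iso.inv_hom_id_assoc _ _).trans (comp_id _).symm
  · exact (id_comp _).trans (comp_id _).symm

/-- A projective resolution obtained from a chosen epi `p : P0 ⟶ Z` with `P0` projective. -/
def resolutionOfEpi {Z P0 : C} [Projective P0] (p : P0 ⟶ Z) [Epi p] :
    ProjectiveResolution Z where
  complex := resComplex p
  π := (ChainComplex.toSingle₀Equiv _ _).symm ⟨p, by
          rw [resComplex_d_1_0]; exact (assoc (π (kernel p)) (kernel.ι p) p).trans (by rw [kernel.condition, comp_zero]; rfl)⟩
  quasiIso := ⟨fun n => by
    cases n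
    · rw [ChainComplex.quasiIsoAt₀_iff, ShortComplex.quasiIso_iff_of_zeros']
      · refine (ShortComplex.exact_and_epi_g_iff_of_iso ?_).2
          ⟨exact_d_f p, by dsimp; infer_instance⟩
        exact ShortComplex.isoMk (Iso.refl _) (Iso.refl _) (Iso.refl _)
          (by simp [resComplex]; erw [id_comp, comp_id])
          (by simp; erw [id_comp, comp_id, ChainComplex.toSingle₀Equiv_symm_apply_f_zero])
      all_goals rfl
    · rw [quasiIsoAt_iff_exactAt']
      · apply resComplex_exactAt_succ
      · apply ChainComplex.exactAt_succ_single_obj⟩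

end

/-- Pure tensors whose second component consists of annihilating scalars vanish. -/
lemma tmul_eq_zero_of_ann {R : Type u} [CommRing R] {L : Type u} [AddCommGroup L] [Module R L]
    {n : ℕ} (l : L) (x : Fin n → R) (hx : ∀ i, x i ∈ Module.annihilator R L) :
    (l ⊗ₜ[R] x : L ⊗[R] (Fin n → R)) = 0 := by
  apply (TensorProduct.piScalarRight R R L (Fin n)).injective
  rw [map_zero]
  ext i
  simp only [TensorProduct.piScalarRight_apply, TensorProduct.piScalarRightHom_tmul,
    Pi.zero_apply]
  exact Module.mem_annihilator.mp (hx i) l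

/-- Under the hypothesis `M ⊗ N ≅ M^k`, entries of elements of `ker π`
annihilate `M`. -/
lemma ker_le_ann {R : Type u} [CommRing R] [IsNoetherianRing R]
    {M : Type u} [AddCommGroup M] [Module R M] [Module.Finite R M]
    {N : Type u} [AddCommGroup N] [Module R N] {k : ℕ}
    (e : (M ⊗[R] N) ≃ₗ[R] (Fin k → M)) (π : (Fin k → R) →ₗ[R] N)
    (hπ : Function.Surjective π) :
    ∀ x ∈ LinearMap.ker π, ∀ i, x i ∈ Module.annihilator R M := by
  let c := TensorProduct.piScalarRight R R M (Fin k)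
  let f : (Fin k → M) →ₗ[R] (Fin k → M) :=
    e.toLinearMap ∘ₗ (LinearMap.lTensor M π) ∘ₗ c.symm.toLinearMap
  have hfsurj : Function.Surjective f := by
    apply e.surjective.comp
    exact (LinearMap.lTensor_surjective M hπ).comp c.symm.surjective
  haveI : IsNoetherian R (Fin k → M) := isNoetherian_of_isNoetherianRing_of_finite R _
  have hfinj : Function.Injective f :=
    IsNoetherian.injective_of_surjective_endomorphism f hfsurj
  have hlinj : Function.Injective (LinearMap.lTensor M π) := by
    intro a b hab
    have : f (c a) = f (c b) := by
      simp only [f, LinearMap.coe_comp, Function.comp_apply, LinearEquiv.coe_coe,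
        LinearEquiv.symm_apply_apply, hab, c]
    exact c.injective (hfinj this)
  intro x hx i
  rw [Module.mem_annihilator]
  intro m
  have h0 : (m ⊗ₜ[R] x : M ⊗[R] (Fin k → R)) = 0 := by
    apply hlinj
    rw [map_zero, LinearMap.lTensor_tmul, LinearMap.mem_ker.mp hx, tmul_zero]
  have := congrFun (congrArg c h0) i
  simpa only [c, TensorProduct.piScalarRight_apply, TensorProduct.piScalarRightHom_tmul,
    map_zero, Pi.zero_apply] using this

open CategoryTheory.MonoidalCategory CategoryTheory.Limits CategoryTheory.Projective in
/-- Abstract computation of `Tor₁` from a projective resolution whose first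
differential vanishes after applying `L ⊗ -`. -/
noncomputable def torOneIso {R : Type u} [CommRing R] {N L : Type u}
    [AddCommGroup N] [Module R N] [AddCommGroup L] [Module R L]
    (P : ProjectiveResolution (ModuleCat.of R N))
    (W : ModuleCat.{u} R) (t : P.complex.X 1 ⟶ W)
    (ht : Function.Surjective t)
    (hg : LinearMap.lTensor L ((P.complex.d 1 0).hom : P.complex.X 1 →ₗ[R] P.complex.X 0) = 0)
    (hex : LinearMap.range ((P.complex.d 2 1).hom : P.complex.X 2 →ₗ[R] P.complex.X 1)
      = LinearMap.ker (t.hom : P.complex.X 1 →ₗ[R] W)) :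
    (((Tor (ModuleCat.{u} R) 1).obj (ModuleCat.of R L)).obj (ModuleCat.of R N)) ≅
      ModuleCat.of R (L ⊗[R] W) := by
  let TL := (tensoringLeft (ModuleCat.{u} R)).obj (ModuleCat.of R L)
  let K := (TL.mapHomologicalComplex _).obj P.complex
  let S := K.sc' 2 1 0
  have i1 : (((Tor (ModuleCat.{u} R) 1).obj (ModuleCat.of R L)).obj (ModuleCat.of R N)) ≅
      (TL.leftDerived 1).obj (ModuleCat.of R N) := Iso.refl _
  have i2 := P.isoLeftDerivedObj TL 1
  have i4 : K.homology 1 ≅ S.homology := K.homologyIsoSc' 2 1 0 (by simp) (by simp)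
  have i5 : S.homology ≅ S.moduleCatLeftHomologyData.H := S.moduleCatHomologyIso
  refine i1 ≪≫ i2 ≪≫ i4 ≪≫ i5 ≪≫ ?_
  -- concrete linear algebra from here on
  have hkertop : LinearMap.ker (S.g.hom : S.X₂ →ₗ[R] S.X₃) = ⊤ := by
    rw [show (S.g.hom : S.X₂ →ₗ[R] S.X₃)
      = LinearMap.lTensor L ((P.complex.d 1 0).hom : P.complex.X 1 →ₗ[R] P.complex.X 0) from rfl, hg]
    exact LinearMap.ker_zero
  let w : S.X₂ →ₗ[R] (L ⊗[R] W) := LinearMap.lTensor L (t.hom : P.complex.X 1 →ₗ[R] W)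
  have hw : Function.Surjective w := LinearMap.lTensor_surjective L ht
  have hkerw : LinearMap.ker w = LinearMap.range (S.f.hom : S.X₁ →ₗ[R] S.X₂) := by
    have hx : Function.Exact ((P.complex.d 2 1).hom : P.complex.X 2 →ₗ[R] P.complex.X 1)
        (t.hom : P.complex.X 1 →ₗ[R] W) := by
      rw [LinearMap.exact_iff, hex]
    have h2 := lTensor_exact (N := P.complex.X 1) L hx ht
    rw [LinearMap.exact_iff] at h2
    rw [show (w : S.X₂ →ₗ[R] (L ⊗[R] W)) = LinearMap.lTensor L (t.hom : P.complex.X 1 →ₗ[R] W)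
      from rfl]
    exact h2
  let e1 : LinearMap.ker (S.g.hom : S.X₂ →ₗ[R] S.X₃) ≃ₗ[R] S.X₂ :=
    (LinearEquiv.ofEq _ _ hkertop).trans Submodule.topEquiv
  have hmap : (LinearMap.range S.moduleCatToCycles).map e1.toLinearMap
      = LinearMap.range (S.f.hom : S.X₁ →ₗ[R] S.X₂) := by
    ext y
    constructor
    · rintro ⟨z, ⟨x, rfl⟩, rfl⟩
      exact ⟨x, rfl⟩
    · rintro ⟨x, rfl⟩
      exact ⟨S.moduleCatToCycles x, ⟨x, rfl⟩, rfl⟩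
  let q1 := Submodule.Quotient.equiv (LinearMap.range S.moduleCatToCycles)
      ((LinearMap.range S.moduleCatToCycles).map e1.toLinearMap) e1 rfl
  let q2 := Submodule.quotEquivOfEq ((LinearMap.range S.moduleCatToCycles).map e1.toLinearMap)
      (LinearMap.ker w) (by rw [hmap, hkerw])
  let q3 := w.quotKerEquivOfSurjective hw
  exact (q1.trans (q2.trans q3)).toModuleIso

end Stmt3Aux

open Stmt3Aux CategoryTheory.MonoidalCategory CategoryTheory.Limits CategoryTheory.Projective

/-- Let `R` be a commutative Noetherian local ring, `M ≠ 0` and `N` finitely generated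
`R`-modules with `M ⊗_R N ≅ M^{μ(N)}`, and set `J = Ann_R M`.  Then for every finitely
generated `R`-module `L` with `J ⊆ Ann_R L`, we have `Tor₁(L, N) ≅ L ⊗_R Ω¹(N)`, where
`Ω¹(N)` is the kernel of a minimal free cover `R^{μ(N)} → N`. -/
theorem stmt3 {R : Type u} [CommRing R] [IsNoetherianRing R] [IsLocalRing R]
    {M N : Type u} [AddCommGroup M] [Module R M] [Module.Finite R M] [Nontrivial M]
    [AddCommGroup N] [Module R N] [Module.Finite R N]
    (h : Nonempty ((M ⊗[R] N) ≃ₗ[R] (Fin (minGens R N) → M)))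
    (L : Type u) [AddCommGroup L] [Module R L] [Module.Finite R L]
    (hL : Module.annihilator R M ≤ Module.annihilator R L)
    (π : (Fin (minGens R N) → R) →ₗ[R] N) (hπ : Function.Surjective π) :
    Nonempty ((((Tor (ModuleCat.{u} R) 1).obj (ModuleCat.of R L)).obj (ModuleCat.of R N)) ≅
      ModuleCat.of R (L ⊗[R] (LinearMap.ker π))) := by
  obtain ⟨e⟩ := h
  have hann : ∀ x ∈ LinearMap.ker π, ∀ i, x i ∈ Module.annihilator R L :=
    fun x hx i => hL (ker_le_ann e π hπ x hx i)
  -- the chosen epi in `ModuleCat`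
  let F0 : ModuleCat.{u} R := ModuleCat.of R (Fin (minGens R N) → R)
  let p : F0 ⟶ ModuleCat.of R N := ModuleCat.ofHom π
  haveI : CategoryTheory.Projective F0 :=
    ModuleCat.projective_of_free (Pi.basisFun R (Fin (minGens R N)))
  haveI : CategoryTheory.Epi p := (ModuleCat.epi_iff_surjective p).mpr hπ
  -- the map `L ⊗ ker π → L ⊗ F0` is zero
  have hsub : (LinearMap.lTensor L (LinearMap.ker π).subtype) = 0 := by
    apply TensorProduct.ext'
    rintro l ⟨x, hx⟩
    rw [LinearMap.lTensor_tmul, LinearMap.zero_apply, Submodule.coe_subtype]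
    exact tmul_eq_zero_of_ann l x (hann x hx)
  let W : ModuleCat.{u} R := ModuleCat.of R (LinearMap.ker π)
  let t : (resComplex p).X 1 ⟶ W :=
    Projective.π (kernel p) ≫ (ModuleCat.kernelIsoKer p).hom
  have htsurj : Function.Surjective t := by
    rw [← ModuleCat.epi_iff_surjective]
    exact @epi_comp _ _ _ _ _ _ (Projective.π_epi _) _ inferInstance
  have hgc : LinearMap.lTensor L ((resComplex p).d 1 0).hom = 0 := by
    rw [resComplex_d_1_0 p]
    show LinearMap.lTensor L (Projective.π (kernel p) ≫ kernel.ι p).hom = 0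
    rw [← ModuleCat.kernelIsoKer_hom_ker_subtype p, ModuleCat.hom_comp, ModuleCat.hom_comp,
      LinearMap.lTensor_comp, LinearMap.lTensor_comp, show LinearMap.lTensor L
        (ModuleCat.ofHom (ModuleCat.Hom.hom p).ker.subtype).hom = 0 from hsub, LinearMap.zero_comp,
      LinearMap.zero_comp]
  have hmono : LinearMap.ker (kernel.ι p).hom = ⊥ := by
    rw [LinearMap.ker_eq_bot, ← ModuleCat.mono_iff_injective]
    infer_instance
  have hiso : LinearMap.ker (ModuleCat.kernelIsoKer p).hom.hom = ⊥ := by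
    rw [LinearMap.ker_eq_bot, ← ModuleCat.mono_iff_injective]
    infer_instance
  have hexc : LinearMap.range ((resComplex p).d 2 1).hom = LinearMap.ker t.hom := by
    rw [resComplex_d_2_1 p]
    refine ((CategoryTheory.exact_d_f (C := ModuleCat.{u} R) (Projective.d p)).moduleCat_range_eq_ker).trans ?_
    show LinearMap.ker (Projective.π (kernel p) ≫ kernel.ι p).hom
      = LinearMap.ker (Projective.π (kernel p) ≫ (ModuleCat.kernelIsoKer p).hom).hom
    rw [ModuleCat.hom_comp, ModuleCat.hom_comp,
      LinearMap.ker_comp_of_ker_eq_bot _ hmono, LinearMap.ker_comp_of_ker_eq_bot _ hiso]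
  exact ⟨torOneIso (resolutionOfEpi p) W t htsurj hgc hexc⟩
end

section
/- Let R be a commutative Noetherian local ring and M ≠ 0, N finitely generated R-modules such that M ⊗_R N ≅ M^{⊕μ(N)}. If Tor_1^R(M, N) = 0, then N is a free R-module. -/
open CategoryTheory TensorProduct

universe u

namespace Stmt4Aux

open LinearMap Function

variable {R : Type u} [CommRing R]

/-- Step 1: injectivity of `M ⊗ range d₁ → M ⊗ P₀`. -/
lemma step1 {M P0 P1 P2 : Type u} [AddCommGroup M] [Module R M] [AddCommGroup P0] [Module R P0]
    [AddCommGroup P1] [Module R P1] [AddCommGroup P2] [Module R P2]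
    (d1 : P1 →ₗ[R] P0) (d2 : P2 →ₗ[R] P1)
    (hdd : d1 ∘ₗ d2 = 0)
    (hT : ker (lTensor M d1) ≤ range (lTensor M d2)) :
    Injective (lTensor M (range d1).subtype) := by
  rw [← ker_eq_bot, eq_bot_iff]
  intro x hx
  obtain ⟨y, rfl⟩ := lTensor_surjective M d1.surjective_rangeRestrict x
  have hy : y ∈ ker (lTensor M d1) := by
    have h : d1 = (range d1).subtype ∘ₗ d1.rangeRestrict := by ext v; rfl
    rw [mem_ker, h, lTensor_comp, LinearMap.comp_apply]
    exact hx
  obtain ⟨z, rfl⟩ := hT hy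
  have hcd : d1.rangeRestrict ∘ₗ d2 = 0 := by
    ext v
    have h2 := LinearMap.ext_iff.1 hdd v
    simpa using h2
  rw [Submodule.mem_bot, ← LinearMap.comp_apply, ← lTensor_comp, hcd, lTensor_zero]
  rfl

/-- Step 2: transfer injectivity between projective presentations. -/
lemma step2 {M F P0 N : Type u} [AddCommGroup M] [Module R M] [AddCommGroup F] [Module R F]
    [AddCommGroup P0] [Module R P0] [AddCommGroup N] [Module R N]
    [Module.Projective R F] [Module.Projective R P0]
    (f : F →ₗ[R] N) (π : P0 →ₗ[R] N) (hf : Surjective f) (hπ : Surjective π)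
    (hinj : Injective (lTensor M (ker π).subtype)) :
    Injective (lTensor M (ker f).subtype) := by
  obtain ⟨α, hα⟩ := Module.projective_lifting_property π f hπ
  obtain ⟨β, hβ⟩ := Module.projective_lifting_property f π hf
  set ι := (ker f).subtype with hι
  set ι' := (ker π).subtype with hι'
  have hαK : ∀ v : ker f, α (ι v) ∈ ker π := fun v => by
    rw [mem_ker, ← LinearMap.comp_apply, hα]
    exact v.2
  set α' : ker f →ₗ[R] ker π := (α ∘ₗ ι).codRestrict _ (fun v => hαK v) with hα'
  have hβK : ∀ v : ker π, β (ι' v) ∈ ker f := fun v => by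
    rw [mem_ker, ← LinearMap.comp_apply, hβ]
    exact v.2
  set β' : ker π →ₗ[R] ker f := (β ∘ₗ ι').codRestrict _ (fun v => hβK v) with hβ'
  have hγ0 : ∀ v : F, (β ∘ₗ α - (LinearMap.id : F →ₗ[R] F)) v ∈ ker f := fun v => by
    rw [mem_ker, LinearMap.sub_apply, map_sub, LinearMap.comp_apply,
      ← LinearMap.comp_apply (f := f), hβ, LinearMap.id_apply, ← LinearMap.comp_apply (f := π),
      hα, sub_self]
  set γ : F →ₗ[R] ker f := (β ∘ₗ α - (LinearMap.id : F →ₗ[R] F)).codRestrict _ hγ0 with hγ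
  rw [← ker_eq_bot, eq_bot_iff]
  intro x hx
  have hx0 : lTensor M ι x = 0 := hx
  have h1 : lTensor M α' x = 0 := by
    apply hinj
    have hc : ι' ∘ₗ α' = α ∘ₗ ι := by ext v; rfl
    rw [← LinearMap.comp_apply, ← lTensor_comp, hc, lTensor_comp, LinearMap.comp_apply, hx0,
      map_zero, map_zero]
  have hkey : β' ∘ₗ α' = (LinearMap.id : ker f →ₗ[R] ker f) + γ ∘ₗ ι := by
    ext v
    show β (α (ι v)) = ι (v + γ (ι v))
    rw [map_add]
    show β (α (ι v)) = ι v + (β ∘ₗ α - (LinearMap.id : F →ₗ[R] F)) (ι v)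
    simp only [LinearMap.sub_apply, LinearMap.comp_apply, LinearMap.id_apply]
    abel
  have h2 : lTensor M (β' ∘ₗ α') x = x := by
    rw [hkey, lTensor_add, lTensor_id, LinearMap.add_apply, LinearMap.id_apply, lTensor_comp,
      LinearMap.comp_apply, hx0, map_zero, add_zero]
  rw [Submodule.mem_bot, ← h2, lTensor_comp, LinearMap.comp_apply, h1, map_zero]

/-- Step 3: over a local ring, `M ⊗ K = 0` with `M` finite nontrivial and `K` finite
forces `K = 0`. -/
lemma step3 [IsLocalRing R] {M K : Type u} [AddCommGroup M] [Module R M] [Module.Finite R M]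
    [Nontrivial M] [AddCommGroup K] [Module R K] [Module.Finite R K]
    (hsub : Subsingleton (M ⊗[R] K)) : Subsingleton K := by
  set k := IsLocalRing.ResidueField R with hk
  have hkM : Nontrivial (k ⊗[R] M) := by
    by_contra hc
    rw [not_nontrivial_iff_subsingleton] at hc
    exact not_subsingleton M ((IsLocalRing.subsingleton_tensorProduct (R := R) (M := M)).1 hc)
  set b := Module.Basis.ofVectorSpace k (k ⊗[R] M) with hb
  obtain ⟨i⟩ := b.index_nonempty
  set φ : (k ⊗[R] M) →ₗ[k] k := b.coord i with hφ
  set s : M →ₗ[R] k := (φ.restrictScalars R) ∘ₗ (TensorProduct.mk R k M 1) with hs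
  have hs0 : s ≠ 0 := by
    intro h0
    have hφ0 : φ = 0 := by
      apply LinearMap.ext
      intro x
      induction x using TensorProduct.induction_on with
      | zero => simp
      | tmul c m =>
        have h1 : φ ((1 : k) ⊗ₜ[R] m) = 0 := by
          have := LinearMap.ext_iff.1 h0 m
          simpa [hs] using this
        have h2 : (c : k) ⊗ₜ[R] m = c • ((1 : k) ⊗ₜ[R] m) := by
          rw [smul_tmul', smul_eq_mul, mul_one]
        rw [h2, map_smul, h1, smul_zero, LinearMap.zero_apply]
      | add x y hx hy =>
        rw [map_add, hx, hy]
        simp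
    have h1 : φ (b i) = 1 := by simp [hφ]
    rw [hφ0] at h1
    simp at h1
  have hssurj : Surjective s := by
    have hsimple : IsSimpleModule R (R ⧸ IsLocalRing.maximalIdeal R) := by
      rw [isSimpleModule_iff_isCoatom]
      exact (Ideal.isMaximal_def).1 (IsLocalRing.maximalIdeal.isMaximal R)
    haveI : IsSimpleModule R k := hsimple
    rcases eq_bot_or_eq_top (range s) with h | h
    · exact absurd (LinearMap.range_eq_bot.1 h) hs0
    · exact range_eq_top.1 h
  have h1 : Surjective (rTensor K s) := rTensor_surjective K hssurj
  have h2 : Subsingleton (k ⊗[R] K) := h1.subsingleton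
  exact (IsLocalRing.subsingleton_tensorProduct (R := R)).1 h2

end Stmt4Aux

/-- Let `R` be a commutative Noetherian local ring and `M ≠ 0`, `N` finitely generated
`R`-modules such that `M ⊗_R N ≅ M^{μ(N)}`.  If `Tor₁(M, N) = 0`, then `N` is free. -/
theorem stmt4 {R : Type u} [CommRing R] [IsNoetherianRing R] [IsLocalRing R]
    {M N : Type u} [AddCommGroup M] [Module R M] [Module.Finite R M] [Nontrivial M]
    [AddCommGroup N] [Module R N] [Module.Finite R N]
    (h : Nonempty ((M ⊗[R] N) ≃ₗ[R] (Fin (minGens R N) → M)))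
    (htor : Subsingleton (((Tor (ModuleCat.{u} R) 1).obj (ModuleCat.of R M)).obj
      (ModuleCat.of R N))) :
    Module.Free R N := by
  classical
  obtain ⟨e1⟩ := h
  -- a surjection realizing the minimal number of generators
  obtain ⟨kk, f0, hf0⟩ := Module.Finite.exists_fin' R N
  have hex : ∃ f : (Fin (minGens R N) → R) →ₗ[R] N, Function.Surjective f :=
    Nat.sInf_mem (⟨kk, f0, hf0⟩ :
      {n : ℕ | ∃ f : (Fin n → R) →ₗ[R] N, Function.Surjective f}.Nonempty)
  set n := minGens R N with hn
  set F := (Fin n → R) with hF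
  obtain ⟨f, hf⟩ := hex
  -- a projective resolution of N
  obtain ⟨P⟩ := (HasProjectiveResolution.out (Z := ModuleCat.of R N))
  set M' := ModuleCat.of R M with hM'
  -- extract exactness of the tensored complex at degree 1 from Tor₁ = 0
  have hT : LinearMap.ker (LinearMap.lTensor M
        ((P.complex.d 1 0).hom : P.complex.X 1 →ₗ[R] P.complex.X 0)) ≤
      LinearMap.range (LinearMap.lTensor M
        ((P.complex.d 2 1).hom : P.complex.X 2 →ₗ[R] P.complex.X 1)) := by
    have hsub : Subsingleton
        (((MonoidalCategory.tensorLeft M').leftDerived 1).obj (ModuleCat.of R N)) := htor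
    have hz : Limits.IsZero
        (((MonoidalCategory.tensorLeft M').leftDerived 1).obj (ModuleCat.of R N)) :=
      ModuleCat.isZero_of_subsingleton _
    have hz2 := hz.of_iso (P.isoLeftDerivedObj (MonoidalCategory.tensorLeft M') 1).symm
    set C := ((MonoidalCategory.tensorLeft M').mapHomologicalComplex _).obj P.complex with hC
    have hEx : C.ExactAt 1 := (HomologicalComplex.exactAt_iff_isZero_homology _ _).2 hz2
    rw [C.exactAt_iff' 2 1 0 (by simp) (by simp)] at hEx
    rw [ShortComplex.moduleCat_exact_iff_ker_sub_range] at hEx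
    exact hEx
  set d10 : P.complex.X 1 →ₗ[R] P.complex.X 0 := (P.complex.d 1 0).hom with hd10
  set d21 : P.complex.X 2 →ₗ[R] P.complex.X 1 := (P.complex.d 2 1).hom with hd21
  have hdd : d10 ∘ₗ d21 = 0 := congrArg ModuleCat.Hom.hom (P.complex.d_comp_d 2 1 0)
  have hinj1 : Function.Injective
      (LinearMap.lTensor M (LinearMap.range d10).subtype) :=
    Stmt4Aux.step1 d10 d21 hdd hT
  -- π₀, the augmentation
  set π₀ : P.complex.X 0 →ₗ[R] N := (P.π.f 0).hom with hπ₀'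
  have hπ₀ : Function.Surjective π₀ :=
    (ModuleCat.epi_iff_surjective (P.π.f 0)).1 inferInstance
  have hrange : LinearMap.range d10 = LinearMap.ker π₀ := by
    apply le_antisymm
    · rintro _ ⟨y, rfl⟩
      have h0 := LinearMap.ext_iff.1 (congrArg ModuleCat.Hom.hom P.complex_d_comp_π_f_zero :
        (P.π.f 0).hom ∘ₗ d10 = 0) y
      exact h0
    · have hex := P.exact₀
      rw [ShortComplex.moduleCat_exact_iff_ker_sub_range] at hex
      exact hex
  have hinj1' : Function.Injective
      (LinearMap.lTensor M (LinearMap.ker π₀).subtype) := hrange ▸ hinj1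
  -- projectivity
  haveI hprojX0 : Module.Projective R (P.complex.X 0) :=
    (IsProjective.iff_projective.{u, u} (P.complex.X 0)).2 (P.projective 0)
  -- transfer to our chosen minimal presentation
  have hinjK : Function.Injective
      (LinearMap.lTensor M (LinearMap.ker f).subtype) :=
    Stmt4Aux.step2 f π₀ hf hπ₀ hinj1'
  -- the surjective endomorphism trick
  set e2 : (M ⊗[R] F) ≃ₗ[R] (Fin n → M) :=
    (TensorProduct.piRight R R M fun _ : Fin n => R).trans
      (LinearEquiv.piCongrRight fun _ : Fin n => TensorProduct.rid R M) with he2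
  set g : (M ⊗[R] F) →ₗ[R] (M ⊗[R] F) :=
    e2.symm.toLinearMap ∘ₗ e1.toLinearMap ∘ₗ LinearMap.lTensor M f with hg
  have hgsurj : Function.Surjective g := by
    apply e2.symm.surjective.comp
    exact e1.surjective.comp (LinearMap.lTensor_surjective M hf)
  haveI : Module.Finite R (M ⊗[R] F) := Module.Finite.tensorProduct R M F
  have hginj : Function.Injective g :=
    OrzechProperty.injective_of_surjective_endomorphism g hgsurj
  have hfι : f ∘ₗ (LinearMap.ker f).subtype = 0 := by
    ext v
    exact v.2
  have hMK : Subsingleton (M ⊗[R] (LinearMap.ker f)) := by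
    refine subsingleton_of_forall_eq 0 fun x => ?_
    apply hinjK
    rw [map_zero]
    apply hginj
    rw [map_zero, hg, LinearMap.comp_apply, LinearMap.comp_apply, ← LinearMap.comp_apply
      (f := LinearMap.lTensor M f), ← LinearMap.lTensor_comp, hfι, LinearMap.lTensor_zero,
      LinearMap.zero_apply, map_zero, map_zero]
  haveI : Module.Finite R (LinearMap.ker f) :=
    ⟨(Submodule.fg_top _).2 (IsNoetherian.noetherian _)⟩
  haveI hKsub : Subsingleton (LinearMap.ker f) := Stmt4Aux.step3 hMK
  have hker : LinearMap.ker f = ⊥ := by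
    rw [eq_bot_iff]
    intro x hx
    have : (⟨x, hx⟩ : LinearMap.ker f) = 0 := Subsingleton.elim _ _
    simpa using congrArg Subtype.val this
  exact Module.Free.of_equiv (LinearEquiv.ofBijective f ⟨LinearMap.ker_eq_bot.1 hker, hf⟩)
end

section
/- Let (R, m, k) be a commutative Noetherian local ring and N a finitely generated R-module of finite length. If μ(N) > ℓ(mN) · μ(m), then some minimal generator of N lies in the socle of N, and consequently k is a direct summand of N. -/
open IsLocalRing

/-- The length of an `R`-module `M` (height of `⊤` in the submodule lattice). -/
noncomputable def mlength (R : Type*) [Semiring R] (M : Type*) [AddCommMonoid M]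
    [Module R M] : ℕ∞ :=
  Order.height (⊤ : Submodule R M)


section OrderAux

lemma aux_prod_len {α β : Type*} [PartialOrder α] [PartialOrder β] :
    ∀ (n : ℕ) (p : LTSeries (α × β)), p.length = n →
      (n : ℕ∞) ≤ Order.height p.last.1 + Order.height p.last.2 := by
  intro n
  induction n with
  | zero => intro p _; simp
  | succ n ih =>
    intro p hp
    have hlast : p.eraseLast.last < p.last := p.eraseLast_last_rel_last (by omega)
    have hlen : p.eraseLast.length = n := by simp [RelSeries.eraseLast, hp]
    have hih := ih p.eraseLast hlen
    rcases Prod.lt_iff.mp hlast with ⟨h1, h2⟩ | ⟨h1, h2⟩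
    · by_cases htop : Order.height p.last.1 = ⊤
      · rw [htop, top_add]; exact le_top
      · have hfin : Order.height p.eraseLast.last.1 < ⊤ :=
          lt_of_le_of_lt (Order.height_mono h1.le) (lt_top_iff_ne_top.mpr htop)
        have h1' : Order.height p.eraseLast.last.1 + 1 ≤ Order.height p.last.1 :=
          (ENat.add_one_le_iff hfin.ne).mpr (Order.height_strictMono h1 hfin)
        calc ((n + 1 : ℕ) : ℕ∞)
            = (n : ℕ∞) + 1 := by push_cast; ring
          _ ≤ (Order.height p.eraseLast.last.1 + Order.height p.eraseLast.last.2) + 1 :=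
              add_le_add_left hih 1
          _ = (Order.height p.eraseLast.last.1 + 1) + Order.height p.eraseLast.last.2 := by
              rw [add_right_comm]
          _ ≤ Order.height p.last.1 + Order.height p.last.2 :=
              add_le_add h1' (Order.height_mono h2)
    · by_cases htop : Order.height p.last.2 = ⊤
      · rw [htop, add_top]; exact le_top
      · have hfin : Order.height p.eraseLast.last.2 < ⊤ :=
          lt_of_le_of_lt (Order.height_mono h2.le) (lt_top_iff_ne_top.mpr htop)
        have h2' : Order.height p.eraseLast.last.2 + 1 ≤ Order.height p.last.2 :=
          (ENat.add_one_le_iff hfin.ne).mpr (Order.height_strictMono h2 hfin)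
        calc ((n + 1 : ℕ) : ℕ∞)
            = (n : ℕ∞) + 1 := by push_cast; ring
          _ ≤ (Order.height p.eraseLast.last.1 + Order.height p.eraseLast.last.2) + 1 :=
              add_le_add_left hih 1
          _ = Order.height p.eraseLast.last.1 + (Order.height p.eraseLast.last.2 + 1) := by
              rw [add_assoc]
          _ ≤ Order.height p.last.1 + Order.height p.last.2 :=
              add_le_add (Order.height_mono h1) h2'

lemma height_prod_le {α β : Type*} [PartialOrder α] [PartialOrder β] (x : α × β) :
    Order.height x ≤ Order.height x.1 + Order.height x.2 := by
  apply Order.height_le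
  intro p hp
  have := aux_prod_len p.length p rfl
  rwa [hp] at this

end OrderAux


section ModAux
variable {R : Type*} [Ring R]

lemma mlen_le_of_injective {M M' : Type*} [AddCommGroup M] [Module R M]
    [AddCommGroup M'] [Module R M'] (f : M →ₗ[R] M') (hf : Function.Injective f) :
    Order.height (⊤ : Submodule R M) ≤ Order.height (⊤ : Submodule R M') := by
  have hsm : StrictMono (Submodule.map f) :=
    Monotone.strictMono_of_injective (fun _ _ h => Submodule.map_mono h)
      (Submodule.map_injective_of_injective hf)
  calc Order.height (⊤ : Submodule R M)
      ≤ Order.height (Submodule.map f ⊤) :=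
        Order.height_le_height_apply_of_strictMono _ hsm _
    _ ≤ Order.height (⊤ : Submodule R M') := Order.height_mono le_top

lemma mlen_le_of_surjective {M M' : Type*} [AddCommGroup M] [Module R M]
    [AddCommGroup M'] [Module R M'] (f : M →ₗ[R] M') (hf : Function.Surjective f) :
    Order.height (⊤ : Submodule R M') ≤ Order.height (⊤ : Submodule R M) := by
  have hsm : StrictMono (Submodule.comap f) :=
    Monotone.strictMono_of_injective (fun _ _ h => Submodule.comap_mono h)
      (Submodule.comap_injective_of_surjective hf)
  calc Order.height (⊤ : Submodule R M')
      ≤ Order.height (Submodule.comap f ⊤) :=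
        Order.height_le_height_apply_of_strictMono _ hsm _
    _ ≤ Order.height (⊤ : Submodule R M) := Order.height_mono le_top

lemma mlen_congr {M M' : Type*} [AddCommGroup M] [Module R M]
    [AddCommGroup M'] [Module R M'] (e : M ≃ₗ[R] M') :
    Order.height (⊤ : Submodule R M) = Order.height (⊤ : Submodule R M') :=
  le_antisymm (mlen_le_of_injective e.toLinearMap e.injective)
    (mlen_le_of_injective e.symm.toLinearMap e.symm.injective)

end ModAux

section ProdAux
variable {R : Type*} [Ring R]

lemma mlen_prod_le {A B : Type*} [AddCommGroup A] [Module R A] [AddCommGroup B] [Module R B] :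
    Order.height (⊤ : Submodule R (A × B)) ≤
      Order.height (⊤ : Submodule R A) + Order.height (⊤ : Submodule R B) := by
  set f : Submodule R (A × B) → Submodule R A × Submodule R B :=
    fun P => (P.comap (LinearMap.inl R A B), P.map (LinearMap.snd R A B)) with hf
  have hmono : Monotone f := fun P Q h => ⟨Submodule.comap_mono h, Submodule.map_mono h⟩
  have hkey : ∀ P Q : Submodule R (A × B), P ≤ Q → f P = f Q → P = Q := by
    intro P Q hPQ hfeq
    have h1 : P.comap (LinearMap.inl R A B) = Q.comap (LinearMap.inl R A B) :=
      congrArg Prod.fst hfeq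
    have h2 : P.map (LinearMap.snd R A B) = Q.map (LinearMap.snd R A B) :=
      congrArg Prod.snd hfeq
    refine le_antisymm hPQ ?_
    rintro ⟨a, b⟩ hab
    have hb : b ∈ Q.map (LinearMap.snd R A B) := ⟨(a, b), hab, rfl⟩
    rw [← h2] at hb
    obtain ⟨⟨a', b'⟩, hP, hb'⟩ := hb
    simp only [LinearMap.snd_apply] at hb'
    subst hb'
    have hsub : ((a - a', 0) : A × B) ∈ Q := by
      have := Q.sub_mem hab (hPQ hP)
      simpa using this
    have hc : a - a' ∈ Q.comap (LinearMap.inl R A B) := by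
      simpa [Submodule.mem_comap] using hsub
    rw [← h1] at hc
    have hP2 : ((a - a', 0) : A × B) ∈ P := by
      simpa [Submodule.mem_comap] using hc
    have := P.add_mem hP2 hP
    simpa using this
  have hsm : StrictMono f := fun P Q h =>
    lt_of_le_of_ne (hmono h.le) (fun he => h.ne (hkey P Q h.le he))
  calc Order.height (⊤ : Submodule R (A × B))
      ≤ Order.height (f ⊤) := Order.height_le_height_apply_of_strictMono f hsm ⊤
    _ ≤ Order.height ((⊤ : Submodule R A), (⊤ : Submodule R B)) := by
        apply Order.height_mono; exact le_top
    _ ≤ Order.height (⊤ : Submodule R A) + Order.height (⊤ : Submodule R B) :=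
        height_prod_le _

/-- `Fin (t+1) → A` is linearly equivalent to `A × (Fin t → A)`. -/
def finSuccPiEquiv (t : ℕ) (A : Type*) [AddCommGroup A] [Module R A] :
    (Fin (t + 1) → A) ≃ₗ[R] A × (Fin t → A) where
  toFun f := (f 0, fun i => f i.succ)
  invFun p := Fin.cons p.1 p.2
  map_add' f g := rfl
  map_smul' r f := rfl
  left_inv f := by
    funext i
    exact Fin.cases rfl (fun j => rfl) i
  right_inv p := by
    cases p
    simp

lemma mlen_pi_le (A : Type*) [AddCommGroup A] [Module R A] (t : ℕ) :
    Order.height (⊤ : Submodule R (Fin t → A)) ≤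
      (t : ℕ∞) * Order.height (⊤ : Submodule R A) := by
  induction t with
  | zero =>
    have : IsMin (⊤ : Submodule R (Fin 0 → A)) := by
      intro b _
      exact le_of_eq (Subsingleton.elim _ _)
    simp [Order.height_eq_zero.mpr this]
  | succ t ih =>
    calc Order.height (⊤ : Submodule R (Fin (t + 1) → A))
        = Order.height (⊤ : Submodule R (A × (Fin t → A))) := mlen_congr (finSuccPiEquiv t A)
      _ ≤ Order.height (⊤ : Submodule R A) + Order.height (⊤ : Submodule R (Fin t → A)) :=
          mlen_prod_le
      _ ≤ Order.height (⊤ : Submodule R A) + (t : ℕ∞) * Order.height (⊤ : Submodule R A) :=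
          add_le_add_right ih _
      _ = ((t + 1 : ℕ) : ℕ∞) * Order.height (⊤ : Submodule R A) := by
          push_cast
          rw [add_mul, one_mul, add_comm]

end ProdAux


section GenAux
variable {R : Type*} [Ring R]

lemma gen_of_height_le :
    ∀ (d : ℕ) (Q : Type*) [AddCommGroup Q] [Module R Q],
      Order.height (⊤ : Submodule R Q) ≤ (d : ℕ∞) →
      ∃ s : Fin d → Q, Submodule.span R (Set.range s) = ⊤ := by
  intro d
  induction d with
  | zero =>
    intro Q _ _ h
    have h0 : Order.height (⊤ : Submodule R Q) = 0 := le_antisymm (by exact_mod_cast h) (zero_le)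
    have hmin : IsMin (⊤ : Submodule R Q) := Order.height_eq_zero.mp h0
    refine ⟨fun i => 0, ?_⟩
    have : (⊤ : Submodule R Q) ≤ ⊥ := hmin bot_le
    exact le_antisymm le_top (le_trans this bot_le)
  | succ d ih =>
    intro Q _ _ h
    by_cases hQ : ∀ q : Q, q = 0
    · refine ⟨fun _ => 0, ?_⟩
      refine le_antisymm le_top ?_
      intro q _
      rw [hQ q]; exact Submodule.zero_mem _
    · push_neg at hQ
      obtain ⟨q, hq⟩ := hQ
      set P : Submodule R Q := Submodule.span R {q} with hP
      have hPbot : (⊥ : Submodule R Q) < P := by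
        rw [bot_lt_iff_ne_bot, hP, Ne, Submodule.span_singleton_eq_bot]
        exact hq
      have hquot : Order.height (⊤ : Submodule R (Q ⧸ P)) ≤ (d : ℕ∞) := by
        apply Order.height_le
        intro p hp
        have hcm : StrictMono (Submodule.comap P.mkQ) :=
          Monotone.strictMono_of_injective (fun _ _ h => Submodule.comap_mono h)
            (Submodule.comap_injective_of_surjective P.mkQ_surjective)
        set p' := p.map _ hcm with hp'
        have hhead : (⊥ : Submodule R Q) < p'.head := by
          refine lt_of_lt_of_le hPbot ?_
          have : P = Submodule.comap P.mkQ ⊥ := by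
            rw [Submodule.comap_bot, Submodule.ker_mkQ]
          rw [this]
          exact Submodule.comap_mono bot_le
        set p'' := p'.cons ⊥ hhead with hp''
        have hlast : p''.last = ⊤ := by
          rw [hp'', RelSeries.last_cons, hp', LTSeries.last_map, hp, Submodule.comap_top]
        have hle := Order.length_le_height_last (p := p'')
        rw [hlast] at hle
        have hL : p''.length = p.length + 1 := by
          simp [hp'', RelSeries.cons_length, hp']
        rw [hL] at hle
        have hfin : ((p.length + 1 : ℕ) : ℕ∞) ≤ ((d + 1 : ℕ) : ℕ∞) := by
          refine le_trans (by exact_mod_cast hle) (by exact_mod_cast h)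
        have := Nat.cast_le (α := ℕ∞) |>.mp hfin
        exact_mod_cast Nat.le_of_succ_le_succ this
      obtain ⟨s', hs'⟩ := ih (Q ⧸ P) hquot
      choose s'' hs'' using fun i => Submodule.Quotient.mk_surjective P (s' i)
      refine ⟨Fin.cons q s'', ?_⟩
      rw [eq_top_iff]
      intro y _
      have hy : P.mkQ y ∈ Submodule.span R (Set.range s') := by rw [hs']; trivial
      have hrange : Set.range s' = P.mkQ '' (Set.range s'') := by
        rw [← Set.range_comp]
        have hcomp : (P.mkQ ∘ s'') = s' := funext fun i => hs'' i
        rw [hcomp]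
      rw [hrange, ← Submodule.map_span] at hy
      obtain ⟨z, hz, hzy⟩ := hy
      have hsub : y - z ∈ P := by
        rw [← Submodule.Quotient.eq]
        exact hzy.symm
      have hqmem : q ∈ Set.range (Fin.cons q s'' : Fin (d + 1) → Q) := ⟨0, rfl⟩
      have h1 : y - z ∈ Submodule.span R (Set.range (Fin.cons q s'' : Fin (d + 1) → Q)) := by
        refine Submodule.span_mono ?_ hsub
        rw [Set.singleton_subset_iff]
        exact hqmem
      have h2 : z ∈ Submodule.span R (Set.range (Fin.cons q s'' : Fin (d + 1) → Q)) := by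
        refine Submodule.span_mono ?_ hz
        rintro a ⟨i, rfl⟩
        exact ⟨i.succ, by simp⟩
      have := Submodule.add_mem _ h1 h2
      simpa using this

end GenAux

section Aux2

lemma surj_of_span {R : Type*} [Ring R] {M : Type*} [AddCommGroup M] [Module R M]
    {n : ℕ} (s : Fin n → M) (hs : Submodule.span R (Set.range s) = ⊤) :
    ∃ f : (Fin n → R) →ₗ[R] M, Function.Surjective f := by
  refine ⟨(Finsupp.linearCombination R s).comp
    (Finsupp.linearEquivFunOnFinite R R (Fin n)).symm.toLinearMap, ?_⟩
  have h1 : Function.Surjective (Finsupp.linearCombination R s) := by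
    rw [← LinearMap.range_eq_top, Finsupp.range_linearCombination, hs]
  exact h1.comp (Finsupp.linearEquivFunOnFinite R R (Fin n)).symm.surjective

end Aux2

/-- Let `(R, m, k)` be a commutative Noetherian local ring and `N` a finitely generated
`R`-module of finite length.  If `μ(N) > ℓ(mN) · μ(m)`, then some minimal generator of
`N` lies in the socle of `N`, and consequently `k` is a direct summand of `N`. -/
theorem stmt10 {R : Type*} [CommRing R] [IsNoetherianRing R] [IsLocalRing R]
    {N : Type*} [AddCommGroup N] [Module R N] [Module.Finite R N]
    (hfl : IsFiniteLength R N)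
    (hgt : (minGens R N : ℕ∞) >
      mlength R (maximalIdeal R • ⊤ : Submodule R N) * (minGens R (maximalIdeal R) : ℕ∞)) :
    (∃ x : N, (∀ r ∈ maximalIdeal R, r • x = 0) ∧
      x ∉ (maximalIdeal R • ⊤ : Submodule R N)) ∧
    (∃ K S : Submodule R N, IsCompl K S ∧ Nonempty (K ≃ₗ[R] ResidueField R)) := by
  classical
  -- notation
  set t := minGens R (maximalIdeal R) with ht
  -- the maximal ideal is finitely generated, so we get a surjection from `R^t`
  have hmfin : Module.Finite R ↥(maximalIdeal R) :=
    Module.Finite.iff_fg.mpr (IsNoetherian.noetherian _)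
  have hne : ∃ f : (Fin t → R) →ₗ[R] ↥(maximalIdeal R), Function.Surjective f := by
    have hnonempty :
        {n : ℕ | ∃ f : (Fin n → R) →ₗ[R] ↥(maximalIdeal R), Function.Surjective f}.Nonempty := by
      obtain ⟨n, s, hs⟩ := Module.Finite.exists_fin (R := R) (M := ↥(maximalIdeal R))
      exact ⟨n, surj_of_span s hs⟩
    exact Nat.sInf_mem hnonempty
  obtain ⟨fm, hfm⟩ := hne
  set r : Fin t → R := fun i => ((fm ((Pi.single i (1:R) : Fin t → R)) : ↥(maximalIdeal R)) : R) with hr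
  have hrmem : ∀ i, r i ∈ maximalIdeal R := fun i => (fm ((Pi.single i (1:R) : Fin t → R))).2
  have hrep : ∀ a ∈ maximalIdeal R, ∃ c : Fin t → R, a = ∑ i, c i * r i := by
    intro a ha
    obtain ⟨v, hv⟩ := hfm ⟨a, ha⟩
    refine ⟨v, ?_⟩
    have hsum : fm v = ∑ i, v i • fm ((Pi.single i (1:R) : Fin t → R)) := by
      conv_lhs => rw [← Finset.univ_sum_single v]
      rw [map_sum]
      congr 1
      funext i
      have : (Pi.single i (v i) : Fin t → R) = v i • (Pi.single i (1:R) : Fin t → R) := by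
        rw [← Pi.single_smul, smul_eq_mul, mul_one]
      rw [this, map_smul]
    have ha' : a = ((fm v : ↥(maximalIdeal R)) : R) := by rw [hv]
    rw [ha', hsum]
    push_cast
    simp [hr, smul_eq_mul]
  -- Part 1: there is a minimal generator in the socle
  have key : ∃ x : N, (∀ a ∈ maximalIdeal R, a • x = 0) ∧
      x ∉ (maximalIdeal R • ⊤ : Submodule R N) := by
    by_contra hcon
    push_neg at hcon
    set φ : N →ₗ[R] (Fin t → ↥(maximalIdeal R • ⊤ : Submodule R N)) :=
      LinearMap.pi (fun i => LinearMap.codRestrict _ (LinearMap.lsmul R N (r i))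
        (fun x => Submodule.smul_mem_smul (hrmem i) Submodule.mem_top)) with hφ
    have hker : LinearMap.ker φ ≤ (maximalIdeal R • ⊤ : Submodule R N) := by
      intro x hx
      apply hcon x
      intro a ha
      obtain ⟨c, hc⟩ := hrep a ha
      have hxi : ∀ i, r i • x = 0 := by
        intro i
        have h0 := congrFun (LinearMap.mem_ker.mp hx) i
        exact Subtype.ext_iff.mp h0
      rw [hc, Finset.sum_smul]
      refine Finset.sum_eq_zero fun i _ => ?_
      rw [mul_smul, hxi i, smul_zero]
    have h1 : Order.height (⊤ : Submodule R (N ⧸ (maximalIdeal R • ⊤ : Submodule R N))) ≤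
        Order.height (⊤ : Submodule R (N ⧸ LinearMap.ker φ)) := by
      refine mlen_le_of_surjective
        (Submodule.mapQ (LinearMap.ker φ) (maximalIdeal R • ⊤) LinearMap.id
          (by simpa using hker)) ?_
      intro y
      obtain ⟨x, rfl⟩ := Submodule.Quotient.mk_surjective _ y
      exact ⟨Submodule.Quotient.mk x, by rw [Submodule.mapQ_apply]; rfl⟩
    have h2 : Order.height (⊤ : Submodule R (N ⧸ LinearMap.ker φ)) ≤
        Order.height (⊤ : Submodule R (Fin t → ↥(maximalIdeal R • ⊤ : Submodule R N))) := by
      refine mlen_le_of_injective ((LinearMap.ker φ).liftQ φ le_rfl) ?_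
      rw [← LinearMap.ker_eq_bot]
      exact Submodule.ker_liftQ_eq_bot _ _ _ le_rfl
    have h3 := mlen_pi_le (R := R) ↥(maximalIdeal R • ⊤ : Submodule R N) t
    have hchain : Order.height (⊤ : Submodule R (N ⧸ (maximalIdeal R • ⊤ : Submodule R N))) ≤
        mlength R (maximalIdeal R • ⊤ : Submodule R N) * (t : ℕ∞) := by
      refine le_trans (le_trans h1 h2) (le_trans h3 ?_)
      rw [mlength, mul_comm]
    have hlt := hgt
    have hlt' : Order.height (⊤ : Submodule R (N ⧸ (maximalIdeal R • ⊤ : Submodule R N))) <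
        (minGens R N : ℕ∞) := lt_of_le_of_lt hchain hlt
    have hne_top : Order.height (⊤ : Submodule R (N ⧸ (maximalIdeal R • ⊤ : Submodule R N))) ≠ ⊤ :=
      ne_top_of_lt (lt_of_lt_of_le hlt' le_top)
    obtain ⟨d, hd⟩ := WithTop.ne_top_iff_exists.mp hne_top
    obtain ⟨s', hs'⟩ := gen_of_height_le d (N ⧸ (maximalIdeal R • ⊤ : Submodule R N))
      (le_of_eq hd.symm)
    choose y hy using fun i =>
      Submodule.Quotient.mk_surjective (maximalIdeal R • ⊤ : Submodule R N) (s' i)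
    have hsup : Submodule.span R (Set.range y) ⊔ (maximalIdeal R • ⊤ : Submodule R N) = ⊤ := by
      rw [eq_top_iff]
      intro nn _
      have h0 : (maximalIdeal R • ⊤ : Submodule R N).mkQ nn ∈ Submodule.span R (Set.range s') := by
        rw [hs']; trivial
      have hcomp : ((maximalIdeal R • ⊤ : Submodule R N).mkQ ∘ y) = s' := funext fun i => hy i
      rw [← hcomp, Set.range_comp, ← Submodule.map_span] at h0
      obtain ⟨z, hz, hzn⟩ := h0
      have hmem : nn - z ∈ (maximalIdeal R • ⊤ : Submodule R N) := by
        rw [← Submodule.Quotient.eq]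
        exact hzn.symm
      have hnz : nn = z + (nn - z) := by abel
      rw [hnz]
      exact Submodule.add_mem _ (Submodule.mem_sup_left hz) (Submodule.mem_sup_right hmem)
    have hspan : Submodule.span R (Set.range y) = ⊤ := by
      rw [eq_top_iff]
      refine Submodule.le_of_le_smul_of_le_jacobson_bot ?_
        (IsLocalRing.maximalIdeal_le_jacobson ⊥) ?_
      · exact Module.finite_def.mp inferInstance
      · exact le_of_eq hsup.symm
    obtain ⟨g, hg⟩ := surj_of_span y hspan
    have hmu : minGens R N ≤ d := Nat.sInf_le ⟨g, hg⟩
    have hfinal : (minGens R N : ℕ∞) < (minGens R N : ℕ∞) := by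
      calc (minGens R N : ℕ∞) ≤ (d : ℕ∞) := Nat.cast_le.mpr hmu
        _ = _ := hd
        _ ≤ mlength R (maximalIdeal R • ⊤ : Submodule R N) * (t : ℕ∞) := hchain
        _ < _ := hgt
    exact lt_irrefl _ hfinal
  obtain ⟨x, hx1, hx2⟩ := key
  refine ⟨⟨x, hx1, hx2⟩, ?_⟩
  -- Part 2: the direct summand
  have hNoeth : IsNoetherian R N := inferInstance
  obtain ⟨S, hSmem, hSmax⟩ := (set_has_maximal_iff_noetherian.mpr hNoeth)
    {S : Submodule R N | (maximalIdeal R • ⊤ : Submodule R N) ≤ S ∧ x ∉ S}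
    ⟨(maximalIdeal R • ⊤ : Submodule R N), le_rfl, hx2⟩
  obtain ⟨hS1, hS2⟩ := hSmem
  have hunit : ∀ c : R, c ∉ maximalIdeal R → IsUnit c := by
    intro c hc
    by_contra hc0
    exact hc ((IsLocalRing.mem_maximalIdeal c).mpr (mem_nonunits_iff.mpr hc0))
  have hsmul_inv : ∀ (u : Rˣ) (z : N), ((u⁻¹ : Rˣ) : R) • ((u : R) • z) = z := by
    intro u z
    rw [smul_smul, Units.inv_mul, one_smul]
  refine ⟨Submodule.span R {x}, S, ⟨?_, ?_⟩, ?_⟩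
  · -- disjoint
    rw [disjoint_iff, eq_bot_iff]
    rintro z ⟨hzK, hzS⟩
    obtain ⟨c, rfl⟩ := Submodule.mem_span_singleton.mp hzK
    by_cases hcm : c ∈ maximalIdeal R
    · rw [hx1 c hcm]
      exact Submodule.zero_mem _
    · exfalso
      obtain ⟨u, rfl⟩ := hunit c hcm
      have hxS : x ∈ S := by
        have := S.smul_mem ((u⁻¹ : Rˣ) : R) hzS
        rwa [hsmul_inv] at this
      exact hS2 hxS
  · -- codisjoint
    rw [codisjoint_iff, eq_top_iff]
    intro yy _
    by_cases hyS : yy ∈ S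
    · exact Submodule.mem_sup_right hyS
    · have hlt : S < S ⊔ Submodule.span R {yy} := by
        refine lt_of_le_of_ne le_sup_left (fun he => hyS ?_)
        rw [he]
        exact Submodule.mem_sup_right (Submodule.mem_span_singleton_self yy)
      have hxmem : x ∈ S ⊔ Submodule.span R {yy} := by
        by_contra hxnot
        exact hSmax _ ⟨le_trans hS1 le_sup_left, hxnot⟩ hlt
      obtain ⟨s, hs, z, hz, hsz⟩ := Submodule.mem_sup.mp hxmem
      obtain ⟨c, rfl⟩ := Submodule.mem_span_singleton.mp hz
      by_cases hcm : c ∈ maximalIdeal R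
      · exfalso
        have hmn : c • yy ∈ (maximalIdeal R • ⊤ : Submodule R N) :=
          Submodule.smul_mem_smul hcm Submodule.mem_top
        have hxS : x ∈ S := by
          rw [← hsz]
          exact S.add_mem hs (hS1 hmn)
        exact hS2 hxS
      · obtain ⟨u, rfl⟩ := hunit c hcm
        have huy : (u : R) • yy = x - s := by
          rw [← hsz]
          abel
        have hsub : (u : R) • yy ∈ Submodule.span R {x} ⊔ S := by
          rw [huy]
          exact Submodule.sub_mem _
            (Submodule.mem_sup_left (Submodule.mem_span_singleton_self x))
            (Submodule.mem_sup_right hs)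
        have := Submodule.smul_mem _ ((u⁻¹ : Rˣ) : R) hsub
        rwa [hsmul_inv] at this
  · -- span {x} is isomorphic to the residue field
    have hker : LinearMap.ker (LinearMap.toSpanSingleton R N x) = maximalIdeal R := by
      refine le_antisymm (IsLocalRing.le_maximalIdeal ?_) ?_
      · intro htop
        have h1 : (1 : R) ∈ LinearMap.ker (LinearMap.toSpanSingleton R N x) := by
          rw [htop]; trivial
        have hx0 : x = 0 := by
          simpa [LinearMap.toSpanSingleton_apply] using h1
        exact hx2 (hx0 ▸ Submodule.zero_mem _)
      · intro a ha
        exact LinearMap.mem_ker.mpr (hx1 a ha)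
    exact ⟨(LinearEquiv.ofEq _ _ (LinearMap.span_singleton_eq_range R N x)).trans
      (((LinearMap.toSpanSingleton R N x).quotKerEquivRange.symm).trans
        (Submodule.quotEquivOfEq _ _ hker))⟩
end

section
/- Let R be a commutative Noetherian local ring and M a finitely generated R-module with M ⊗_R N ≅ M^{⊕μ(N)} for a finitely generated R-module N. If L is any nonzero finitely generated R-module with Ann_R(M) ⊆ Ann_R(L) and Tor_1^R(L, N) = 0, then N is free over R. -/
open CategoryTheory TensorProduct Function

universe u

section Aux
variable {R : Type u} [CommRing R] {N : Type u} [AddCommGroup N] [Module R N]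
variable {n m : ℕ} (p : (Fin n → R) →ₗ[R] N) (q : (Fin m → R) →ₗ[R] (LinearMap.ker p))

/-- first differential -/
noncomputable def auxd1 : ModuleCat.of R (Fin m → R) ⟶ ModuleCat.of R (Fin n → R) :=
  ModuleCat.ofHom ((LinearMap.ker p).subtype ∘ₗ q)

noncomputable def auxComplex : ChainComplex (ModuleCat.{u} R) ℕ :=
  ChainComplex.mk' (ModuleCat.of R (Fin n → R)) (ModuleCat.of R (Fin m → R)) (auxd1 p q)
    (fun f => ⟨_, Projective.d f, by exact (Category.assoc _ _ _).trans (by rw [Limits.kernel.condition]; exact Limits.comp_zero)⟩)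

lemma auxd1_comp : auxd1 p q ≫ ModuleCat.ofHom p = 0 := by
  ext v
  exact (q _).2

lemma auxComplex_d_1_0 : (auxComplex p q).d 1 0 = auxd1 p q := by
  simp [auxComplex]

lemma auxComplex_exactAt_succ (k : ℕ) : (auxComplex p q).ExactAt (k + 1) := by
  rw [HomologicalComplex.exactAt_iff' _ (k + 1 + 1) (k + 1) k (by simp) (by simp)]
  refine ShortComplex.exact_of_iso ?_ (exact_d_f ((auxComplex p q).d (k + 1) k))
  refine ShortComplex.isoMk (ChainComplex.mk'XIso _ _ _ _ k : (auxComplex p q).X (k + 2) ≅ _).symm (Iso.refl _) (Iso.refl _) ?_ ?_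
  · show _ ≫ (auxComplex p q).d (k + 2) (k + 1) = _
    unfold auxComplex
    rw [ChainComplex.mk'_d]
    simp
    exact (Category.comp_id _).symm
  · exact (Category.id_comp _).trans (Category.comp_id _).symm

instance (k : ℕ) : Projective ((auxComplex p q).X k) := by
  obtain (_ | _ | _ | k) := k
  · exact ModuleCat.projective_of_free (Pi.basisFun R (Fin n))
  · exact ModuleCat.projective_of_free (Pi.basisFun R (Fin m))
  · apply Projective.projective_over
  · apply Projective.projective_over

noncomputable def auxResolution (hp : Surjective p) (hq : Surjective q) :
    ProjectiveResolution (ModuleCat.of R N) where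
  complex := auxComplex p q
  π := (ChainComplex.toSingle₀Equiv _ _).symm ⟨ModuleCat.ofHom p, by
        rw [auxComplex_d_1_0]
        ext v
        exact (q v).2⟩
  quasiIso := ⟨fun k => by
    cases k with
    | zero =>
      rw [ChainComplex.quasiIsoAt₀_iff, ShortComplex.quasiIso_iff_of_zeros']
      · refine (ShortComplex.exact_and_epi_g_iff_of_iso
            (S₂ := ShortComplex.mk (auxd1 p q) (ModuleCat.ofHom p) (auxd1_comp p q)) ?_).2
            ⟨?_, ?_⟩
        · exact ShortComplex.isoMk (Iso.refl _) (Iso.refl _) (Iso.refl _)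
            (by simp [auxComplex_d_1_0]; rfl) (by simp; rfl)
        · rw [ShortComplex.moduleCat_exact_iff]
          intro x hx
          obtain ⟨y, hy⟩ := hq ⟨x, hx⟩
          exact ⟨y, congrArg Subtype.val hy⟩
        · exact (ModuleCat.epi_iff_surjective _).2 hp
      all_goals rfl
    | succ k =>
      rw [quasiIsoAt_iff_exactAt']
      · apply auxComplex_exactAt_succ
      · apply ChainComplex.exactAt_succ_single_obj⟩
end Aux

/-- key tmul vanishing lemma -/
lemma aux_tmul_zero {R : Type u} [CommRing R] {L : Type u} [AddCommGroup L] [Module R L]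
    {n : ℕ} (x : Fin n → R) (hx : ∀ i, x i ∈ Module.annihilator R L) (l : L) :
    (l ⊗ₜ[R] x : L ⊗[R] (Fin n → R)) = 0 := by
  apply (TensorProduct.piScalarRight R R L (Fin n)).injective
  ext j
  simp [Module.mem_annihilator.mp (hx j) l]


/-- Let `R` be a commutative Noetherian local ring and `M ≠ 0`, `N` finitely generated
`R`-modules with `M ⊗_R N ≅ M^{μ(N)}`.  If `L` is a nonzero finitely generated
`R`-module with `Ann_R M ≤ Ann_R L` and `Tor₁(L, N) = 0`, then `N` is free over `R`. -/
theorem stmt17 {R : Type u} [CommRing R] [IsNoetherianRing R] [IsLocalRing R]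
    {M N : Type u} [AddCommGroup M] [Module R M] [Module.Finite R M] [Nontrivial M]
    [AddCommGroup N] [Module R N] [Module.Finite R N]
    (h : Nonempty ((M ⊗[R] N) ≃ₗ[R] (Fin (minGens R N) → M)))
    (L : Type u) [AddCommGroup L] [Module R L] [Module.Finite R L] [Nontrivial L]
    (hL : Module.annihilator R M ≤ Module.annihilator R L)
    (htor : Subsingleton (((Tor (ModuleCat.{u} R) 1).obj (ModuleCat.of R L)).obj
      (ModuleCat.of R N))) :
    Module.Free R N := by
  classical
  -- choose a minimal generating surjection
  set n := minGens R N with hn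
  have hmem : n ∈ {k : ℕ | ∃ f : (Fin k → R) →ₗ[R] N, Function.Surjective f} := by
    apply Nat.sInf_mem
    obtain ⟨k, f, hf⟩ := Module.Finite.exists_fin' R N
    exact ⟨k, f, hf⟩
  obtain ⟨p, hp⟩ := hmem
  haveI : IsNoetherian R (Fin n → R) := inferInstance
  haveI : Module.Finite R ↥(LinearMap.ker p) :=
    Module.Finite.iff_fg.2 (IsNoetherian.noetherian _)
  obtain ⟨m, q, hq⟩ := Module.Finite.exists_fin' R ↥(LinearMap.ker p)
  -- Step A : entries of relations annihilate M
  have hKann : ∀ x ∈ LinearMap.ker p, ∀ i, x i ∈ Module.annihilator R M := by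
    obtain ⟨e⟩ := h
    set α := TensorProduct.piScalarRight R R M (Fin n) with hα
    have hsurj : Function.Surjective
        (e.toLinearMap ∘ₗ (LinearMap.lTensor M p) ∘ₗ α.symm.toLinearMap) := by
      simp only [LinearMap.coe_comp, LinearEquiv.coe_coe]
      exact e.surjective.comp ((LinearMap.lTensor_surjective M hp).comp α.symm.surjective)
    have hinj := OrzechProperty.injective_of_surjective_endomorphism _ hsurj
    have hlt : Function.Injective (LinearMap.lTensor M p) := by
      intro a b hab
      have := hinj (a₁ := α a) (a₂ := α b) (by
        simp only [LinearMap.coe_comp, LinearEquiv.coe_coe, Function.comp_apply,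
          LinearEquiv.symm_apply_apply]
        rw [hab])
      exact α.injective this
    intro x hx i
    rw [Module.mem_annihilator]
    intro mm
    have h0 : (mm ⊗ₜ x : M ⊗[R] (Fin n → R)) = 0 := by
      apply hlt
      rw [LinearMap.mem_ker] at hx
      simp [hx]
    have := congrArg (fun z => α z i) h0
    simpa [hα] using this
  -- Step B : tensor the resolution with L
  set F := (CategoryTheory.MonoidalCategory.tensoringLeft (ModuleCat.{u} R)).obj
    (ModuleCat.of R L) with hF
  let P := auxResolution p q hp hq
  let D := (F.mapHomologicalComplex _).obj P.complex
  have hiso := P.isoLeftDerivedObj F 1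
  have hsub : Subsingleton ((F.leftDerived 1).obj (ModuleCat.of R N)) := htor
  have h1 : CategoryTheory.Limits.IsZero (D.homology 1) :=
    (ModuleCat.isZero_of_subsingleton _).of_iso hiso.symm
  have hex : D.ExactAt 1 := by
    rw [HomologicalComplex.exactAt_iff_isZero_homology]
    exact h1
  rw [HomologicalComplex.exactAt_iff' _ 2 1 0 (by simp) (by simp)] at hex
  rw [ShortComplex.moduleCat_exact_iff] at hex
  -- the first differential of the tensored complex is zero
  have hd10 : (LinearMap.lTensor L ((LinearMap.ker p).subtype ∘ₗ q)) = 0 := by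
    apply TensorProduct.ext'
    intro l v
    simp only [LinearMap.lTensor_tmul, LinearMap.coe_comp, Function.comp_apply,
      Submodule.coe_subtype, LinearMap.zero_apply]
    exact aux_tmul_zero _ (fun i => hL (hKann _ (q v).2 i)) l
  have hq2 : q ∘ₗ (((auxComplex p q).d 2 1 :
      (auxComplex p q).X 2 ⟶ (auxComplex p q).X 1).hom :
      ↑((auxComplex p q).X 2) →ₗ[R] (Fin m → R)) = 0 := by
    have h0 := (auxComplex p q).d_comp_d 2 1 0
    rw [auxComplex_d_1_0] at h0
    exact LinearMap.ext fun v => Subtype.ext (LinearMap.congr_fun (congrArg ModuleCat.Hom.hom h0) v)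
  -- every element of L ⊗ K vanishes
  have key : ∀ z : L ⊗[R] ↥(LinearMap.ker p), z = 0 := by
    intro z
    obtain ⟨w, rfl⟩ := LinearMap.lTensor_surjective L hq z
    obtain ⟨y, hy⟩ := hex w (by
      show (F.map (P.complex.d 1 0)).hom w = 0
      have hch : P.complex.d 1 0 = auxd1 p q := auxComplex_d_1_0 p q
      rw [hch]
      show (LinearMap.lTensor L ((LinearMap.ker p).subtype ∘ₗ q)) w = 0
      rw [hd10]
      rfl)
    have hy' : (LinearMap.lTensor L (((auxComplex p q).d 2 1 :
        (auxComplex p q).X 2 ⟶ (auxComplex p q).X 1).hom :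
        ↑((auxComplex p q).X 2) →ₗ[R] (Fin m → R))) y = w := hy
    have hcomp : (LinearMap.lTensor L q) ∘ₗ (LinearMap.lTensor L
        (((auxComplex p q).d 2 1 : (auxComplex p q).X 2 ⟶ (auxComplex p q).X 1).hom :
        ↑((auxComplex p q).X 2) →ₗ[R] (Fin m → R))) = 0 := by
      erw [← LinearMap.lTensor_comp, hq2]
      simp
    rw [← hy']
    exact DFunLike.congr_fun hcomp y
  haveI : Subsingleton (L ⊗[R] ↥(LinearMap.ker p)) :=
    subsingleton_of_forall_eq 0 fun z => key z
  -- build a surjection L →ₗ[R] residue field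
  haveI hkL : Nontrivial ((R ⧸ IsLocalRing.maximalIdeal R) ⊗[R] L) := by
    have : Nontrivial ((IsLocalRing.ResidueField R) ⊗[R] L) := by
      rw [← not_subsingleton_iff_nontrivial, IsLocalRing.subsingleton_tensorProduct]
      exact not_subsingleton L
    exact this
  let e2 := quotTensorEquivQuotSMul L (IsLocalRing.maximalIdeal R)
  haveI : Nontrivial (L ⧸ (IsLocalRing.maximalIdeal R • ⊤ : Submodule R L)) :=
    (e2.symm.toEquiv).nontrivial
  letI : Field (R ⧸ IsLocalRing.maximalIdeal R) := Ideal.Quotient.field _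
  let b := Module.Basis.ofVectorSpace (R ⧸ IsLocalRing.maximalIdeal R)
    (L ⧸ (IsLocalRing.maximalIdeal R • ⊤ : Submodule R L))
  obtain ⟨i⟩ := b.index_nonempty
  let φ := b.coord i
  let ψ : L →ₗ[R] (R ⧸ IsLocalRing.maximalIdeal R) :=
    (φ.restrictScalars R) ∘ₗ (Submodule.mkQ (IsLocalRing.maximalIdeal R • ⊤ : Submodule R L))
  have hψ : Function.Surjective ψ := by
    intro c
    obtain ⟨l, hl⟩ := Submodule.mkQ_surjective
      (IsLocalRing.maximalIdeal R • ⊤ : Submodule R L) (c • b i)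
    refine ⟨l, ?_⟩
    simp only [ψ, LinearMap.comp_apply, LinearMap.restrictScalars_apply]
    rw [hl]
    simp [φ]
  haveI hsk : Subsingleton ((R ⧸ IsLocalRing.maximalIdeal R) ⊗[R] ↥(LinearMap.ker p)) :=
    (LinearMap.rTensor_surjective ↥(LinearMap.ker p) hψ).subsingleton
  haveI : Subsingleton ↥(LinearMap.ker p) := by
    rw [← IsLocalRing.subsingleton_tensorProduct (R := R)]
    exact hsk
  have hker : LinearMap.ker p = ⊥ := by
    rw [Submodule.eq_bot_iff]
    intro x hx
    exact congrArg Subtype.val (Subsingleton.elim (⟨x, hx⟩ : ↥(LinearMap.ker p)) 0)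
  exact Module.Free.of_equiv (LinearEquiv.ofBijective p ⟨LinearMap.ker_eq_bot.mp hker, hp⟩)
end
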